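/- arXiv:2203.02724 — 2 statements merged into one kernel-verified Lean document; each statement's English description precedes it below -/
import Mathlib

section
/- If I = (m, n, s, t) is a minimal normalized scheduling instance, then for every processor p one has (w'_I(p) + 1)/s(p) ≥ ρ_I. -/
open Finset

/-- A scheduling instance on uniform processors: `m` processors with positive
speeds `s 1, …, s m`, and `n` tasks with positive sizes `t 1 ≥ … ≥ t n`
(tasks are given in non-increasing order of size, as assumed for LPT). -/
structure SchedInstance where
  m : ℕ
  n : ℕ
  s : ℕ → ℝ
  t : ℕ → ℝ
  hm : 1 ≤ m
  hn : 1 ≤ n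
  hs : ∀ p, 1 ≤ p → p ≤ m → 0 < s p
  ht : ∀ i, 1 ≤ i → i ≤ n → 0 < t i
  tsorted : ∀ i j, 1 ≤ i → i ≤ j → j ≤ n → t j ≤ t i

namespace SchedInstance

variable (I : SchedInstance)

/-- The set of processor indices `{1, …, m}`. -/
def procs : Finset ℕ := Finset.Icc 1 I.m

/-- The set of task indices `{1, …, n}`. -/
def tasks : Finset ℕ := Finset.Icc 1 I.n

lemma procs_nonempty : I.procs.Nonempty := Finset.nonempty_Icc.mpr I.hm

/-- A schedule assigns every task `i ∈ {1,…,n}` a processor `A i ∈ {1,…,m}`. -/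
def IsSchedule (A : ℕ → ℕ) : Prop := ∀ i ∈ I.tasks, A i ∈ I.procs

/-- Total size of the tasks assigned by `A` to processor `p`. -/
noncomputable def load (A : ℕ → ℕ) (p : ℕ) : ℝ :=
  ∑ i ∈ I.tasks.filter (fun i => A i = p), I.t i

/-- The makespan of a schedule `A` : the largest completion time
`(Σ_{A i = p} t i) / s p` over the processors `p`. -/
noncomputable def makespan (A : ℕ → ℕ) : ℝ :=
  I.procs.sup' I.procs_nonempty (fun p => I.load A p / I.s p)

/-- `OPT(I)`: the optimal (minimum) makespan over all schedules. -/
noncomputable def opt : ℝ := sInf {r | ∃ A, I.IsSchedule A ∧ I.makespan A = r}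

/-- The completion time of processor `p` if task `i` is added to it while the
current workloads are `w`. -/
noncomputable def cost (w : ℕ → ℝ) (i p : ℕ) : ℝ := (w p + I.t i) / I.s p

/-- The processor the LPT rule chooses for task `i` given current workloads `w` :
the smallest-index processor minimizing `(w p + t i) / s p`. -/
noncomputable def choose (w : ℕ → ℝ) (i : ℕ) : ℕ :=
  (I.procs.filter
    (fun p => I.cost w i p = I.procs.inf' I.procs_nonempty (I.cost w i))).min'
    (by
      obtain ⟨p, hp, hpe⟩ := Finset.exists_mem_eq_inf' I.procs_nonempty (I.cost w i)
      exact ⟨p, Finset.mem_filter.mpr ⟨hp, hpe.symm⟩⟩)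

/-- `lptW k p` : the workload of processor `p` after the LPT algorithm has
assigned tasks `1, …, k` (in this order). -/
noncomputable def lptW : ℕ → ℕ → ℝ
  | 0, _ => 0
  | (k + 1), p =>
      lptW k p + if I.choose (lptW k) (k + 1) = p ∧ k + 1 ≤ I.n then I.t (k + 1) else 0

/-- `A_I` : the LPT assignment; task `i` goes to the least-index processor
minimizing the resulting completion time, given the previous assignments. -/
noncomputable def lptA (i : ℕ) : ℕ := I.choose (I.lptW (i - 1)) i

/-- `LPT(I)` : the makespan of the LPT schedule. -/
noncomputable def lptTime : ℝ := I.makespan I.lptA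

/-- `ρ_I = LPT(I) / OPT(I)` : the approximation ratio of LPT on instance `I`. -/
noncomputable def ratio : ℝ := I.lptTime / I.opt

/-- `I` is normalized: `OPT(I) = 1`, speeds are non-increasing, and the
smallest task has size `t n = 1`. -/
def Normalized : Prop :=
  I.opt = 1 ∧ (∀ p q, 1 ≤ p → p ≤ q → q ≤ I.m → I.s q ≤ I.s p) ∧ I.t I.n = 1

/-- `I` is minimal: every strictly smaller instance has a strictly smaller
LPT approximation ratio. -/
def Minimal : Prop :=
  ∀ J : SchedInstance, J.m ≤ I.m → J.n ≤ I.n →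
    ¬(J.m = I.m ∧ J.n = I.n) → J.ratio < I.ratio

/-- `T_I(p)` : the tasks assigned to processor `p` by the LPT schedule. -/
noncomputable def T (p : ℕ) : Finset ℕ := I.tasks.filter (fun i => I.lptA i = p)

/-- `T'_I(p) = T_I(p) \ {n}` : the LPT tasks of `p`, without the last task. -/
noncomputable def T' (p : ℕ) : Finset ℕ := (I.T p).erase I.n

/-- `w'_I(p)` : the workload of `p` in the LPT schedule without the last task. -/
noncomputable def w' (p : ℕ) : ℝ := ∑ i ∈ I.T' p, I.t i

/-- `T*(p)` for a schedule `A` : the tasks assigned to processor `p` by `A`. -/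
noncomputable def Tstar (A : ℕ → ℕ) (p : ℕ) : Finset ℕ :=
  I.tasks.filter (fun i => A i = p)

/-- `w*(p)` for a schedule `A` : the workload of processor `p` under `A`. -/
noncomputable def wstar (A : ℕ → ℕ) (p : ℕ) : ℝ := ∑ i ∈ I.Tstar A p, I.t i

/-- `A` is an optimal schedule whose workloads satisfy `w*(1) ≥ … ≥ w*(m)`. -/
def IsSortedOptimal (A : ℕ → ℕ) : Prop :=
  I.IsSchedule A ∧ I.makespan A = I.opt ∧
    ∀ p q, 1 ≤ p → p ≤ q → q ≤ I.m → I.wstar A q ≤ I.wstar A p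

/-- Processor `p` dominates processor `q` (with respect to the optimal
schedule `A`): `s p ≤ s q` and there is `f : T*(q) → T'(p)` with
`t i ≥ Σ_{f j = i} t j` for every `i ∈ T'(p)`. -/
def Dominates (A : ℕ → ℕ) (p q : ℕ) : Prop :=
  I.s p ≤ I.s q ∧ ∃ f : ℕ → ℕ,
    (∀ j ∈ I.Tstar A q, f j ∈ I.T' p) ∧
    ∀ i ∈ I.T' p, (∑ j ∈ (I.Tstar A q).filter (fun j => f j = i), I.t j) ≤ I.t i

end SchedInstance

/-- The polynomial `P_m(x) = 2x^m − x^{m−1} − ⋯ − x − 2`. -/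
noncomputable def Pm (m : ℕ) (x : ℝ) : ℝ := 2 * x ^ m - (∑ k ∈ Finset.Ico 1 m, x ^ k) - 2

section Aux

namespace SchedInstance

variable (I : SchedInstance)

lemma choose_spec (w : ℕ → ℝ) (i : ℕ) :
    I.choose w i ∈ I.procs ∧ ∀ p ∈ I.procs, I.cost w i (I.choose w i) ≤ I.cost w i p := by
  have hmem : I.choose w i ∈ I.procs.filter
      (fun p => I.cost w i p = I.procs.inf' I.procs_nonempty (I.cost w i)) :=
    Finset.min'_mem _ _
  rw [Finset.mem_filter] at hmem
  exact ⟨hmem.1, fun p hp => hmem.2 ▸ Finset.inf'_le _ hp⟩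

lemma lptW_eq_sum (k p : ℕ) :
    I.lptW k p = ∑ i ∈ Finset.Icc 1 (min k I.n), (if I.lptA i = p then I.t i else 0) := by
  induction k with
  | zero => simp [lptW]
  | succ k ih =>
    rw [lptW, ih]
    by_cases h : k + 1 ≤ I.n
    · have h1 : min (k+1) I.n = k + 1 := by omega
      have h2 : min k I.n = k := by omega
      rw [h1, h2, ← Finset.insert_Icc_right_eq_Icc_add_one (by omega),
        Finset.sum_insert (by simp)]
      have hA : I.lptA (k+1) = I.choose (I.lptW k) (k+1) := by
        simp [lptA]
      rw [← hA]
      by_cases hc : I.lptA (k+1) = p <;> simp [hc, h] <;> ring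
    · have h1 : min (k+1) I.n = min k I.n := by omega
      simp [h, h1]

lemma load_lptA (p : ℕ) : I.load I.lptA p = I.lptW I.n p := by
  rw [lptW_eq_sum, min_self, load, tasks, Finset.sum_filter]

lemma lptW_nonneg (k p : ℕ) : 0 ≤ I.lptW k p := by
  induction k with
  | zero => simp [lptW]
  | succ k ih =>
    rw [lptW]
    by_cases h : I.choose (I.lptW k) (k + 1) = p ∧ k + 1 ≤ I.n
    · have := I.ht (k+1) (by omega) h.2
      simp [h]; linarith
    · rw [if_neg h, add_zero]; exact ih

lemma load_nonneg (A : ℕ → ℕ) (p : ℕ) : 0 ≤ I.load A p := by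
  refine Finset.sum_nonneg fun i hi => ?_
  rw [Finset.mem_filter, tasks, Finset.mem_Icc] at hi
  exact (I.ht i hi.1.1 hi.1.2).le

lemma makespan_nonneg (A : ℕ → ℕ) : 0 ≤ I.makespan A := by
  obtain ⟨q, hq⟩ := I.procs_nonempty
  refine le_trans ?_ (Finset.le_sup' _ hq)
  have hs := I.hs q (Finset.mem_Icc.mp hq).1 (Finset.mem_Icc.mp hq).2
  exact div_nonneg (I.load_nonneg A q) hs.le

lemma sched_set_nonempty : {r | ∃ A, I.IsSchedule A ∧ I.makespan A = r}.Nonempty := by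
  refine ⟨I.makespan (fun _ => 1), fun _ => 1, fun i _ => ?_, rfl⟩
  simp [procs, Finset.mem_Icc, I.hm]

lemma sched_set_bddBelow : BddBelow {r | ∃ A, I.IsSchedule A ∧ I.makespan A = r} := by
  refine ⟨0, fun r ⟨A, _, hM⟩ => hM ▸ I.makespan_nonneg A⟩

lemma makespan_lb (A : ℕ → ℕ) (hA : I.IsSchedule A) :
    I.t I.n / I.procs.sup' I.procs_nonempty I.s ≤ I.makespan A := by
  have hn : I.n ∈ I.tasks := by simp [tasks, Finset.mem_Icc, I.hn]
  have hAn : A I.n ∈ I.procs := hA _ hn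
  have hAn' := Finset.mem_Icc.mp hAn
  have hsA : 0 < I.s (A I.n) := I.hs _ hAn'.1 hAn'.2
  have hsup : I.s (A I.n) ≤ I.procs.sup' I.procs_nonempty I.s := Finset.le_sup' _ hAn
  have htn : 0 < I.t I.n := I.ht _ I.hn le_rfl
  have h1 : I.t I.n ≤ I.load A (A I.n) := by
    refine Finset.single_le_sum (fun i hi => ?_) ?_
    · rw [Finset.mem_filter, tasks, Finset.mem_Icc] at hi
      exact (I.ht i hi.1.1 hi.1.2).le
    · simp [tasks, Finset.mem_Icc, I.hn, hn]
  calc I.t I.n / I.procs.sup' I.procs_nonempty I.s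
      ≤ I.t I.n / I.s (A I.n) := by gcongr
    _ ≤ I.load A (A I.n) / I.s (A I.n) := by gcongr
    _ ≤ I.makespan A := Finset.le_sup' (fun p => I.load A p / I.s p) hAn

lemma opt_lb : I.t I.n / I.procs.sup' I.procs_nonempty I.s ≤ I.opt :=
  le_csInf I.sched_set_nonempty (fun r ⟨A, hA, hM⟩ => hM ▸ I.makespan_lb A hA)

lemma opt_pos : 0 < I.opt := by
  refine lt_of_lt_of_le ?_ I.opt_lb
  have htn : 0 < I.t I.n := I.ht _ I.hn le_rfl
  obtain ⟨q, hq⟩ := I.procs_nonempty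
  have hq' := Finset.mem_Icc.mp hq
  have : 0 < I.procs.sup' I.procs_nonempty I.s :=
    lt_of_lt_of_le (I.hs q hq'.1 hq'.2) (Finset.le_sup' _ hq)
  positivity

end SchedInstance

end Aux
section Aux2

namespace SchedInstance

variable (I : SchedInstance)

/-- The instance obtained from `I` by dropping the last (smallest) task. -/
def shrink (h : 2 ≤ I.n) : SchedInstance where
  m := I.m
  n := I.n - 1
  s := I.s
  t := I.t
  hm := I.hm
  hn := by omega
  hs := I.hs
  ht := fun i h1 h2 => I.ht i h1 (by omega)
  tsorted := fun i j h1 h2 h3 => I.tsorted i j h1 h2 (by omega)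

lemma shrink_choose (h : 2 ≤ I.n) : (I.shrink h).choose = I.choose := rfl

lemma shrink_lptW (h : 2 ≤ I.n) : ∀ k, k ≤ I.n - 1 → (I.shrink h).lptW k = I.lptW k := by
  intro k
  induction k with
  | zero => intro _; funext p; rfl
  | succ k ih =>
    intro hk
    have ihk := ih (by omega)
    funext p'
    rw [lptW, lptW, ihk, shrink_choose]
    have hif : (I.choose (I.lptW k) (k+1) = p' ∧ k + 1 ≤ (I.shrink h).n) ↔
        (I.choose (I.lptW k) (k+1) = p' ∧ k + 1 ≤ I.n) := by
      have hJn : (I.shrink h).n = I.n - 1 := rfl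
      rw [hJn]
      constructor <;> rintro ⟨h1, h2⟩ <;> exact ⟨h1, by omega⟩
    rw [if_congr hif rfl rfl]
    rfl

lemma shrink_opt_le (h : 2 ≤ I.n) : (I.shrink h).opt ≤ I.opt := by
  refine le_csInf I.sched_set_nonempty ?_
  rintro r ⟨A, hA, rfl⟩
  refine le_trans (csInf_le (I.shrink h).sched_set_bddBelow ⟨A, ?_, rfl⟩) ?_
  · intro i hi
    apply hA
    rw [tasks, Finset.mem_Icc] at hi ⊢
    have : (I.shrink h).n = I.n - 1 := rfl
    rw [this] at hi
    omega
  · rw [makespan, makespan]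
    apply Finset.sup'_le
    intro q hq
    have hq' := Finset.mem_Icc.mp hq
    have hsq : 0 < I.s q := I.hs q hq'.1 hq'.2
    refine le_trans ?_ (Finset.le_sup' (fun p => I.load A p / I.s p) hq)
    show (I.shrink h).load A q / I.s q ≤ I.load A q / I.s q
    apply div_le_div_of_nonneg_right ?_ hsq.le
    case _ =>
      rw [load, load]
      apply Finset.sum_le_sum_of_subset_of_nonneg
      · apply Finset.filter_subset_filter
        rw [tasks, tasks]
        apply Finset.Icc_subset_Icc_right
        have : (I.shrink h).n = I.n - 1 := rfl
        omega
      · intro i hi _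
        rw [Finset.mem_filter, tasks, Finset.mem_Icc] at hi
        exact (I.ht i hi.1.1 hi.1.2).le

end SchedInstance

end Aux2
/-- If `I` is a minimal normalized instance, then `(w'_I(p) + 1) / s p ≥ ρ_I`
for every processor `p`. -/
theorem ratio_le_w'_add_one_div_s (I : SchedInstance)
    (hnorm : I.Normalized) (hmin : I.Minimal)
    (p : ℕ) (hp1 : 1 ≤ p) (hpm : p ≤ I.m) :
    I.ratio ≤ (I.w' p + 1) / I.s p := by
  obtain ⟨hopt, hsmono, htn⟩ := hnorm
  have hp : p ∈ I.procs := Finset.mem_Icc.mpr ⟨hp1, hpm⟩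
  have hsp : 0 < I.s p := I.hs p hp1 hpm
  have hqspec := I.choose_spec (I.lptW (I.n - 1)) I.n
  set q := I.lptA I.n with hqdef
  have hqA : q = I.choose (I.lptW (I.n - 1)) I.n := by rw [hqdef, SchedInstance.lptA]
  have hq : q ∈ I.procs := hqA ▸ hqspec.1
  have hq' := Finset.mem_Icc.mp hq
  have hsq : 0 < I.s q := I.hs q hq'.1 hq'.2
  have htn0 : (0:ℝ) < I.t I.n := I.ht _ I.hn le_rfl
  have hgreedy : I.cost (I.lptW (I.n - 1)) I.n q ≤ I.cost (I.lptW (I.n - 1)) I.n p := by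
    rw [hqA]; exact hqspec.2 p hp
  have hrec : ∀ r, I.lptW I.n r = I.lptW (I.n - 1) r + (if q = r then I.t I.n else 0) := by
    intro r
    have hn' : I.n = (I.n - 1) + 1 := (Nat.succ_pred_eq_of_pos I.hn).symm
    have hch : I.choose (I.lptW (I.n - 1)) ((I.n - 1) + 1) = q := by rw [hqA, ← hn']
    calc I.lptW I.n r = I.lptW ((I.n - 1) + 1) r := by rw [← hn']
      _ = I.lptW (I.n - 1) r +
          (if I.choose (I.lptW (I.n - 1)) ((I.n - 1) + 1) = r ∧ (I.n - 1) + 1 ≤ I.n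
            then I.t ((I.n - 1) + 1) else 0) := by rw [SchedInstance.lptW]
      _ = _ := by rw [hch, ← hn']; simp
  have hw' : I.w' p = I.lptW (I.n - 1) p := by
    have hsum : ∑ i ∈ I.T p, I.t i = I.lptW I.n p := I.load_lptA p
    by_cases hc : q = p
    · have hmem : I.n ∈ I.T p := by
        rw [SchedInstance.T, Finset.mem_filter]
        refine ⟨by simp [SchedInstance.tasks, Finset.mem_Icc, I.hn], ?_⟩
        rw [← hqdef]; exact hc
      have hadd := Finset.add_sum_erase (I.T p) I.t hmem
      have h2 := hrec p
      rw [if_pos hc] at h2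
      rw [SchedInstance.w', SchedInstance.T']
      linarith [hadd, hsum, h2]
    · have hnmem : I.n ∉ I.T p := by
        rw [SchedInstance.T, Finset.mem_filter]
        rintro ⟨-, h⟩
        exact hc (by rw [hqdef]; exact h)
      have h2 := hrec p
      rw [if_neg hc] at h2
      rw [SchedInstance.w', SchedInstance.T', Finset.erase_eq_of_notMem hnmem]
      linarith [hsum, h2]
  have hcostq : I.cost (I.lptW (I.n - 1)) I.n q = I.lptW I.n q / I.s q := by
    rw [SchedInstance.cost, hrec q, if_pos rfl]
  have hcq0 : 0 < I.cost (I.lptW (I.n - 1)) I.n q := by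
    rw [SchedInstance.cost]
    have := I.lptW_nonneg (I.n - 1) q
    positivity
  have hkey : I.lptTime ≤ I.cost (I.lptW (I.n - 1)) I.n q := by
    by_contra hlt
    push_neg at hlt
    obtain ⟨r, hr, hrsup⟩ := Finset.exists_mem_eq_sup' I.procs_nonempty
      (fun p' => I.load I.lptA p' / I.s p')
    have hr' := Finset.mem_Icc.mp hr
    have hsr : 0 < I.s r := I.hs r hr'.1 hr'.2
    have hlpt : I.lptTime = I.lptW I.n r / I.s r := by
      rw [SchedInstance.lptTime, SchedInstance.makespan, hrsup, SchedInstance.load_lptA]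
    have hrq : r ≠ q := by
      intro h
      rw [h, ← hcostq] at hlpt
      rw [hlpt] at hlt
      exact lt_irrefl _ hlt
    have hWr : I.lptW I.n r = I.lptW (I.n - 1) r := by
      rw [hrec r, if_neg (fun h => hrq h.symm)]; ring
    have hn2 : 2 ≤ I.n := by
      by_contra hn1
      have hone : I.n = 1 := by have := I.hn; omega
      have hzero : I.lptW (I.n - 1) r = 0 := by
        rw [hone]; rfl
      rw [hWr, hzero] at hlpt
      simp at hlpt
      linarith
    set J := I.shrink hn2 with hJdef
    have hJn : J.n = I.n - 1 := rfl
    have hJload : J.load J.lptA r = I.lptW (I.n - 1) r := by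
      rw [J.load_lptA r]
      show J.lptW (I.n - 1) r = I.lptW (I.n - 1) r
      rw [I.shrink_lptW hn2 _ le_rfl]
    have hJtime : I.lptTime ≤ J.lptTime := by
      rw [hlpt, hWr, ← hJload]
      show J.load J.lptA r / J.s r ≤ J.lptTime
      rw [SchedInstance.lptTime, SchedInstance.makespan]
      exact Finset.le_sup' (fun p' => J.load J.lptA p' / J.s p') hr
    have hJopt : J.opt ≤ 1 := hopt ▸ I.shrink_opt_le hn2
    have hJopt0 : 0 < J.opt := J.opt_pos
    have hJT0 : 0 ≤ J.lptTime := J.makespan_nonneg _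
    have hratio : I.ratio ≤ J.ratio := by
      rw [SchedInstance.ratio, SchedInstance.ratio, hopt, div_one]
      calc I.lptTime ≤ J.lptTime := hJtime
        _ = J.lptTime / 1 := (div_one _).symm
        _ ≤ J.lptTime / J.opt := by gcongr
    have hlt' := hmin J le_rfl (by rw [hJn]; omega)
      (by rintro ⟨-, h⟩; rw [hJn] at h; omega)
    exact absurd hratio (not_le.mpr hlt')
  have hratio_eq : I.ratio = I.lptTime := by rw [SchedInstance.ratio, hopt, div_one]
  rw [hratio_eq]
  calc I.lptTime ≤ I.cost (I.lptW (I.n - 1)) I.n q := hkey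
    _ ≤ I.cost (I.lptW (I.n - 1)) I.n p := hgreedy
    _ = (I.w' p + 1) / I.s p := by rw [SchedInstance.cost, ← hw', htn]
end

section
/- Let m ≥ 1 and let S be a nonempty subset of {1, …, m}. If x > 0 satisfies Σ_{i∈S} P_i(x) ≤ 0, then x ≤ ρ_m. Moreover, if x > 0 satisfies Σ_{i∈S} P_i(x) + 3 − 2x ≤ 0, then x ≤ ρ_m or x ≥ 3/2. -/
open Finset

private lemma mul_sum_Ico_pow (x : ℝ) (i : ℕ) (hi : 1 ≤ i) :
    x * ∑ k ∈ Finset.Ico 1 i, x ^ k = (∑ k ∈ Finset.Ico 1 i, x ^ k) + x ^ i - x := by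
  induction i, hi using Nat.le_induction with
  | base => simp
  | succ n hn ih =>
      rw [Finset.sum_Ico_succ_top hn, mul_add, ih]
      ring

private lemma Pm_succ (x : ℝ) (i : ℕ) (hi : 1 ≤ i) :
    Pm (i + 1) x = x * Pm i x + x - 2 := by
  unfold Pm
  rw [Finset.sum_Ico_succ_top hi]
  linear_combination mul_sum_Ico_pow x i hi

private lemma Pm_mono_pos (i : ℕ) (hi : 1 ≤ i) (a b : ℝ) (ha : 0 < a) (hab : a < b)
    (hPa : 0 ≤ Pm i a) : 0 < Pm i b := by
  have hb : 0 < b := ha.trans hab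
  have hterm : ∀ k ∈ Finset.Ico 1 i, 0 ≤ a ^ k * b ^ i - b ^ k * a ^ i := by
    intro k hk
    obtain ⟨hk1, hki⟩ := Finset.mem_Ico.mp hk
    have hbi : b ^ i = b ^ k * b ^ (i - k) := by rw [← pow_add]; congr 1; omega
    have hai : a ^ i = a ^ k * a ^ (i - k) := by rw [← pow_add]; congr 1; omega
    have hle : a ^ (i - k) ≤ b ^ (i - k) := pow_le_pow_left₀ ha.le hab.le _
    have h0 : 0 ≤ a ^ k * b ^ k * (b ^ (i - k) - a ^ (i - k)) :=
      mul_nonneg (mul_nonneg (pow_nonneg ha.le k) (pow_nonneg hb.le k))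
        (sub_nonneg.mpr hle)
    rw [hbi, hai]
    nlinarith [h0]
  have hsum : 0 ≤ ∑ k ∈ Finset.Ico 1 i, (a ^ k * b ^ i - b ^ k * a ^ i) :=
    Finset.sum_nonneg hterm
  have hid : Pm i b * a ^ i =
      Pm i a * b ^ i + (∑ k ∈ Finset.Ico 1 i, (a ^ k * b ^ i - b ^ k * a ^ i))
        + 2 * (b ^ i - a ^ i) := by
    simp only [Pm, Finset.sum_sub_distrib, ← Finset.sum_mul]
    ring
  have hpow : a ^ i < b ^ i := pow_lt_pow_left₀ hab ha.le (by omega)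
  have h2 : 0 < Pm i b * a ^ i := by
    nlinarith [mul_nonneg hPa (pow_nonneg hb.le i)]
  nlinarith [pow_pos ha i]

private lemma rho_lt_two (m : ℕ) (hm : 1 ≤ m) (ρ : ℝ) (hρpos : 0 < ρ)
    (hρroot : Pm m ρ = 0) : ρ < 2 := by
  by_contra h
  push_neg at h
  have h1 : (∑ k ∈ Finset.Ico 1 m, ρ ^ k) = (∑ k ∈ Finset.range m, ρ ^ k) - 1 := by
    rw [Finset.range_eq_Ico, Finset.sum_eq_sum_Ico_succ_bot (by omega : 0 < m)]
    simp
  have hG : 0 ≤ ∑ k ∈ Finset.range m, ρ ^ k :=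
    Finset.sum_nonneg fun k _ => pow_nonneg hρpos.le k
  have hgm := geom_sum_mul ρ m
  have hp := pow_pos hρpos m
  rw [Pm, h1] at hρroot
  nlinarith

private lemma Pm_nonneg_of_le (m : ℕ) (hm : 1 ≤ m) (ρ : ℝ) (hρpos : 0 < ρ)
    (hρroot : Pm m ρ = 0) : ∀ i, 1 ≤ i → i ≤ m → 0 ≤ Pm i ρ := by
  have h2 := rho_lt_two m hm ρ hρpos hρroot
  suffices h : ∀ d i, 1 ≤ i → i + d = m → 0 ≤ Pm i ρ by
    intro i hi him
    exact h (m - i) i hi (by omega)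
  intro d
  induction d with
  | zero =>
      intro i hi hd
      rw [show i = m from by omega, hρroot]
  | succ d ih =>
      intro i hi hd
      have hnext : 0 ≤ Pm (i + 1) ρ := ih (i + 1) (by omega) (by omega)
      rw [Pm_succ ρ i hi] at hnext
      nlinarith

/-- Let `m ≥ 1`, let `S` be a nonempty subset of `{1, …, m}`, and let `ρ_m`
be the unique positive root of `P_m`. If `x > 0` and `Σ_{i∈S} P_i(x) ≤ 0`,
then `x ≤ ρ_m`; moreover, if `Σ_{i∈S} P_i(x) + 3 − 2x ≤ 0`, then `x ≤ ρ_m`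
or `x ≥ 3/2`. -/
theorem sum_Pm_nonpos_bounds (m : ℕ) (hm : 1 ≤ m)
    (S : Finset ℕ) (hS : S.Nonempty) (hSsub : S ⊆ Finset.Icc 1 m)
    (ρ : ℝ) (hρpos : 0 < ρ) (hρroot : Pm m ρ = 0)
    (x : ℝ) (hx : 0 < x) :
    ((∑ i ∈ S, Pm i x) ≤ 0 → x ≤ ρ) ∧
    ((∑ i ∈ S, Pm i x) + 3 - 2 * x ≤ 0 → x ≤ ρ ∨ 3 / 2 ≤ x) := by
  have key : ρ < x → 0 < ∑ i ∈ S, Pm i x := by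
    intro hlt
    apply Finset.sum_pos _ hS
    intro i hiS
    obtain ⟨hi1, him⟩ := Finset.mem_Icc.mp (hSsub hiS)
    exact Pm_mono_pos i hi1 ρ x hρpos hlt (Pm_nonneg_of_le m hm ρ hρpos hρroot i hi1 him)
  constructor
  · intro hsum
    by_contra hc
    push_neg at hc
    linarith [key hc]
  · intro hsum
    by_contra hc
    push_neg at hc
    obtain ⟨hc1, hc2⟩ := hc
    linarith [key hc1]
end
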